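/- The three-point periodic rule on [0,2] with nodes 0, 2/3, 4/3 and weights 13/20, 27/40, 27/40 exactly integrates every compactly supported C¹ quartic spline with integer knots when applied periodically; concretely, for the quartic B-spline-type test functions it suffices that: (i) for every quartic p with p(0)=p'(0)=p(1)=p'(1)=0, ∫₀¹ p = (27/40)·p(2/3); and (ii) for every quartic pair (p,q) forming a C¹ function on [0,2] with support [0,2] (p on [0,1], q on [1,2], p(0)=p'(0)=q(2)=q'(2)=0, p(1)=q(1), p'(1)=q'(1)), ∫₀¹ p + ∫₁² q = (13/20)·p(0) + (27/40)·p(2/3) + (27/40)·q(4/3). Claim (i) and (ii) both hold. -/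

import Mathlib

open Polynomial Finset intervalIntegral

private lemma eval_expand (p : Polynomial ℝ) (hp : p.natDegree ≤ 4) (x : ℝ) :
    p.eval x = p.coeff 0 + p.coeff 1 * x + p.coeff 2 * x ^ 2 + p.coeff 3 * x ^ 3
      + p.coeff 4 * x ^ 4 := by
  have h5 : p.natDegree < 5 := lt_of_le_of_lt hp (by norm_num)
  rw [Polynomial.eval_eq_sum_range' h5]
  simp [Finset.sum_range_succ]

private lemma deriv_expand (p : Polynomial ℝ) (hp : p.natDegree ≤ 4) (x : ℝ) :
    p.derivative.eval x = p.coeff 1 + 2 * p.coeff 2 * x + 3 * p.coeff 3 * x ^ 2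
      + 4 * p.coeff 4 * x ^ 3 := by
  have h4 : p.derivative.natDegree < 4 :=
    lt_of_le_of_lt (Polynomial.natDegree_derivative_le p) (by omega)
  rw [Polynomial.eval_eq_sum_range' h4]
  simp [Finset.sum_range_succ, Polynomial.coeff_derivative]
  ring

private lemma integ (p : Polynomial ℝ) (hp : p.natDegree ≤ 4) (a b : ℝ) :
    ∫ x in a..b, p.eval x =
      p.coeff 0 * (b - a) + p.coeff 1 * (b ^ 2 - a ^ 2) / 2
      + p.coeff 2 * (b ^ 3 - a ^ 3) / 3 + p.coeff 3 * (b ^ 4 - a ^ 4) / 4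
      + p.coeff 4 * (b ^ 5 - a ^ 5) / 5 := by
  have h5 : p.natDegree < 5 := lt_of_le_of_lt hp (by norm_num)
  have : (∫ x in a..b, p.eval x)
      = ∫ x in a..b, ∑ i ∈ Finset.range 5, p.coeff i * x ^ i := by
    simp only [Polynomial.eval_eq_sum_range' h5]
  rw [this, intervalIntegral.integral_finset_sum (f := fun i x => p.coeff i * x ^ i)
    (fun i _ => ((continuous_const.mul (continuous_pow i)).intervalIntegrable a b))]
  simp [intervalIntegral.integral_const_mul, integral_pow, Finset.sum_range_succ]
  ring

theorem c1_degree4_rule :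
    (∀ p : Polynomial ℝ, p.natDegree ≤ 4 →
        p.eval 0 = 0 → p.derivative.eval 0 = 0 →
        p.eval 1 = 0 → p.derivative.eval 1 = 0 →
        ∫ x in (0:ℝ)..1, p.eval x = (27/40) * p.eval (2/3)) ∧
    (∀ p q : Polynomial ℝ, p.natDegree ≤ 4 → q.natDegree ≤ 4 →
        p.eval 0 = 0 → p.derivative.eval 0 = 0 →
        q.eval 2 = 0 → q.derivative.eval 2 = 0 →
        p.eval 1 = q.eval 1 → p.derivative.eval 1 = q.derivative.eval 1 →
        (∫ x in (0:ℝ)..1, p.eval x) + ∫ x in (1:ℝ)..2, q.eval x =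
          (13/20) * p.eval 0 + (27/40) * p.eval (2/3) + (27/40) * q.eval (4/3)) := by
  constructor
  · intro p hp h0 h0' h1 h1'
    rw [integ p hp]
    simp only [eval_expand p hp] at h0 h1 ⊢
    simp only [deriv_expand p hp] at h0' h1'
    norm_num at *
    linarith
  · intro p q hp hq h0 h0' h2 h2' hc hc'
    rw [integ p hp, integ q hq]
    simp only [eval_expand p hp, eval_expand q hq] at h0 h2 hc ⊢
    simp only [deriv_expand p hp, deriv_expand q hq] at h0' h2' hc'
    norm_num at *
    linarith
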